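/- Let $\beta_1, \ldots, \beta_m \in \mathbb{N}^n$ and $\beta \in \mathbb{R}^n$. Then the function $x \mapsto \log\left(\sum_{i=1}^m e^{\langle x, \beta_i\rangle}\right) - \langle x, \beta\rangle$ on $\mathbb{R}^n$ is bounded from below if and only if $\beta$ lies in the convex hull of $\{\beta_1, \ldots, \beta_m\}$. -/

import Mathlib

open Finset

theorem stmt10 {n m : ℕ} (hm : 0 < m) (β : Fin m → Fin n → ℕ) (b : Fin n → ℝ) :
    (∃ C : ℝ, ∀ x : Fin n → ℝ,
        C ≤ Real.log (∑ j, Real.exp (∑ i, x i * (β j i : ℝ))) - ∑ i, x i * b i)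
      ↔ b ∈ convexHull ℝ (Set.range fun j => fun i => (β j i : ℝ)) := by
  set g : Fin m → Fin n → ℝ := fun j i => (β j i : ℝ) with hg
  constructor
  · rintro ⟨C, hC⟩
    by_contra hb
    obtain ⟨f, u, hfs, hub⟩ := geometric_hahn_banach_closed_point
      (convex_convexHull ℝ _) ((Set.finite_range g).isClosed_convexHull ℝ) hb
    set y : Fin n → ℝ := fun i => f (Pi.single i 1) with hy
    have key : ∀ v : Fin n → ℝ, f v = ∑ i, v i * y i := by
      intro v
      conv_lhs => rw [pi_eq_sum_univ v]
      rw [map_sum]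
      refine Finset.sum_congr rfl fun i _ => ?_
      rw [map_smul, smul_eq_mul]
      congr 2
      ext j
      simp [hy, Pi.single_apply, eq_comm]
    have hd : 0 < f b - u := by linarith
    set t : ℝ := max 0 ((Real.log m - C + 1) / (f b - u)) with ht
    have ht0 : 0 ≤ t := le_max_left _ _
    have htd : Real.log m - C < t * (f b - u) := by
      rcases le_or_gt ((Real.log m - C + 1) / (f b - u)) 0 with h | h
      · have : Real.log m - C + 1 ≤ 0 := by
          have := (div_nonpos_iff.mp h)
          rcases this with ⟨h1, h2⟩ | ⟨h1, h2⟩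
          · linarith
          · linarith
        have : t = 0 := by simp [ht, h]
        rw [this]; linarith
      · have : t = (Real.log m - C + 1) / (f b - u) := max_eq_right h.le
        rw [this, div_mul_cancel₀ _ (by linarith)]
        linarith
    have hx := hC (t • y)
    have hlin : ∀ v : Fin n → ℝ, (∑ i, (t • y) i * v i) = t * f v := by
      intro v
      rw [key v, Finset.mul_sum]
      refine Finset.sum_congr rfl fun i _ => ?_
      simp [Pi.smul_apply, smul_eq_mul]; ring
    have hsum : (∑ j, Real.exp (∑ i, (t • y) i * g j i)) ≤ m * Real.exp (t * u) := by
      calc (∑ j, Real.exp (∑ i, (t • y) i * g j i))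
          ≤ ∑ _j : Fin m, Real.exp (t * u) := by
            refine Finset.sum_le_sum fun j _ => ?_
            rw [hlin (g j)]
            refine Real.exp_le_exp.mpr ?_
            have := hfs (g j) (subset_convexHull ℝ _ (Set.mem_range_self j))
            exact mul_le_mul_of_nonneg_left this.le ht0
        _ = m * Real.exp (t * u) := by simp [Finset.sum_const, nsmul_eq_mul]
    have hpos : (0:ℝ) < m * Real.exp (t * u) :=
      mul_pos (by exact_mod_cast hm) (Real.exp_pos _)
    have hlog : Real.log (∑ j, Real.exp (∑ i, (t • y) i * g j i)) ≤ Real.log m + t * u := by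
      calc Real.log (∑ j, Real.exp (∑ i, (t • y) i * g j i))
          ≤ Real.log (m * Real.exp (t * u)) := Real.log_le_log (by
            refine Finset.sum_pos (fun j _ => Real.exp_pos _) ?_
            exact Finset.univ_nonempty_iff.mpr (Fin.pos_iff_nonempty.mp hm)) hsum
        _ = Real.log m + t * u := by
            rw [Real.log_mul (by positivity) (Real.exp_ne_zero _), Real.log_exp]
    have hbx : (∑ i, (t • y) i * b i) = t * f b := hlin b
    rw [hbx] at hx
    have : C ≤ Real.log m + t * u - t * f b := by
      refine hx.trans ?_
      have : Real.log (∑ j, Real.exp (∑ i, (t • y) i * (β j i : ℝ))) ≤ Real.log m + t * u := hlog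
      linarith
    nlinarith
  · intro hb
    rw [convexHull_range_eq_exists_affineCombination] at hb
    obtain ⟨s, w, hw0, hw1, hbe⟩ := hb
    rw [affineCombination_eq_centerMass hw1, Finset.centerMass_eq_of_sum_1 _ _ hw1] at hbe
    set w' : Fin m → ℝ := fun j => if j ∈ s then w j else 0 with hw'
    have hw'0 : ∀ j, 0 ≤ w' j := by
      intro j; by_cases h : j ∈ s
      · simpa [hw', h] using hw0 j h
      · simp [hw', h]
    have hw'1 : ∑ j, w' j = 1 := by
      rw [← hw1]
      rw [Finset.sum_ite_mem, Finset.univ_inter]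
    have hbe' : b = ∑ j, w' j • g j := by
      have he : ∀ j, w' j • g j = if j ∈ s then w j • g j else 0 := fun j => by
        by_cases h : j ∈ s <;> simp [hw', h]
      rw [← hbe]
      simp_rw [he]
      rw [Finset.sum_ite_mem, Finset.univ_inter]
    refine ⟨0, fun x => ?_⟩
    have hswap : (∑ i, x i * b i) = ∑ j, w' j * (∑ i, x i * g j i) := by
      rw [hbe']
      simp only [Finset.sum_apply, Pi.smul_apply, smul_eq_mul, Finset.mul_sum]
      rw [Finset.sum_comm]
      exact Finset.sum_congr rfl fun j _ => Finset.sum_congr rfl fun i _ => by ring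
    have jensen : Real.exp (∑ j, w' j * (∑ i, x i * g j i)) ≤
        ∑ j, w' j * Real.exp (∑ i, x i * g j i) := by
      have := convexOn_exp.map_sum_le (t := Finset.univ)
        (w := w') (p := fun j => ∑ i, x i * g j i)
        (fun j _ => hw'0 j) hw'1 (fun j _ => Set.mem_univ _)
      simpa [smul_eq_mul] using this
    have hle2 : (∑ j, w' j * Real.exp (∑ i, x i * g j i)) ≤
        ∑ j, Real.exp (∑ i, x i * g j i) := by
      refine Finset.sum_le_sum fun j _ => ?_
      have hle1 : w' j ≤ 1 := by
        rw [← hw'1]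
        exact Finset.single_le_sum (fun k _ => hw'0 k) (Finset.mem_univ j)
      nlinarith [Real.exp_pos (∑ i, x i * g j i), hw'0 j]
    have hpos : (0:ℝ) < ∑ j, Real.exp (∑ i, x i * g j i) :=
      Finset.sum_pos (fun j _ => Real.exp_pos _)
        (Finset.univ_nonempty_iff.mpr (Fin.pos_iff_nonempty.mp hm))
    have : (∑ i, x i * b i) ≤ Real.log (∑ j, Real.exp (∑ i, x i * (β j i : ℝ))) := by
      rw [hswap, ← Real.log_exp (∑ j, w' j * (∑ i, x i * g j i))]
      exact Real.log_le_log (Real.exp_pos _) (jensen.trans hle2)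
    linarith
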